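/- Let L > 0, κ > 0, w : [0,L] → ℝ continuous, and let μ be a finite Borel measure on [0,L] with total mass η := μ([0,L]) satisfying 0 < η ≤ 1. Then the map Ψ_{w,μ} is a contraction on C([0,L]) with constant κ/(1+κ) < 1: for all p, p' ∈ C([0,L]), sup_{x∈[0,L]} |Ψ_{w,μ}(p)(x) − Ψ_{w,μ}(p')(x)| ≤ (κ/(1+κ))·sup_{x∈[0,L]} |p(x) − p'(x)|. -/

import Mathlib

open MeasureTheory

/-- The market-price map `Ψ_{w,μ}(p)(x) = a + c·p̄ − (1/2)(a + c·p̄ − w(x))⁺`,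
with `η = μ([0,L])`, `a = 1/(1+κη)`, `c = 1 − a` and `p̄ = (1/η)∫ p dμ`. -/
noncomputable def Psi (L κ : ℝ) (w : C(Set.Icc (0:ℝ) L, ℝ))
    (μ : Measure (Set.Icc (0:ℝ) L)) (p : C(Set.Icc (0:ℝ) L, ℝ))
    (x : Set.Icc (0:ℝ) L) : ℝ :=
  let η : ℝ := (μ Set.univ).toReal
  let a : ℝ := 1 / (1 + κ * η)
  let c : ℝ := 1 - a
  let pbar : ℝ := (1 / η) * ∫ y, p y ∂μ
  a + c * pbar - (1 / 2) * max (a + c * pbar - w x) 0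

/-- `Ψ_{w,μ}` is a contraction on `C([0,L])` with constant `κ/(1+κ) < 1`. -/
theorem Psi_contraction (L κ : ℝ) (hL : 0 < L) (hκ : 0 < κ)
    (w : C(Set.Icc (0:ℝ) L, ℝ))
    (μ : Measure (Set.Icc (0:ℝ) L)) [IsFiniteMeasure μ]
    (hη : 0 < (μ Set.univ).toReal) (hη1 : (μ Set.univ).toReal ≤ 1)
    (p p' : C(Set.Icc (0:ℝ) L, ℝ)) :
    κ / (1 + κ) < 1 ∧
    (⨆ x : Set.Icc (0:ℝ) L, |Psi L κ w μ p x - Psi L κ w μ p' x|) ≤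
      (κ / (1 + κ)) * ⨆ x : Set.Icc (0:ℝ) L, |p x - p' x| := by
  have hlip : ∀ u v : ℝ, |(u - (1/2) * max u 0) - (v - (1/2) * max v 0)| ≤ |u - v| := by
    intro u v
    rcases le_total u 0 with hu | hu <;> rcases le_total v 0 with hv | hv <;>
      simp only [max_eq_right hu, max_eq_left hu, max_eq_right hv, max_eq_left hv] <;>
      rw [abs_sub_le_iff] <;> constructor <;>
      [skip; skip; skip; skip; skip; skip; skip; skip] <;>
      nlinarith [le_abs_self (u - v), neg_abs_le (u - v)]
  set η : ℝ := (μ Set.univ).toReal with hηdef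
  have h1 : (0:ℝ) < 1 + κ * η := by positivity
  have h2 : (0:ℝ) < 1 + κ := by linarith
  refine ⟨by rw [div_lt_one h2]; linarith, ?_⟩
  have hne : Nonempty (Set.Icc (0:ℝ) L) := ⟨⟨0, le_refl 0, le_of_lt hL⟩⟩
  set M := ⨆ x : Set.Icc (0:ℝ) L, |p x - p' x| with hMdef
  have hbdd : BddAbove (Set.range fun x : Set.Icc (0:ℝ) L => |p x - p' x|) :=
    (isCompact_range (by continuity)).bddAbove
  have hMge : ∀ y : Set.Icc (0:ℝ) L, |p y - p' y| ≤ M := fun y => le_ciSup hbdd y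
  have hM0 : 0 ≤ M := le_trans (abs_nonneg _) (hMge hne.some)
  -- integrability
  have hip : Integrable (fun y => p y) μ :=
    p.continuous.integrable_of_hasCompactSupport (HasCompactSupport.of_compactSpace _)
  have hip' : Integrable (fun y => p' y) μ :=
    p'.continuous.integrable_of_hasCompactSupport (HasCompactSupport.of_compactSpace _)
  have hint : |(∫ y, p y ∂μ) - ∫ y, p' y ∂μ| ≤ M * η := by
    rw [← integral_sub hip hip']
    calc |∫ y, (p y - p' y) ∂μ| = ‖∫ y, (p y - p' y) ∂μ‖ := rfl
      _ ≤ M * η := by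
          apply norm_integral_le_of_norm_le_const
          filter_upwards with y
          simpa using hMge y
  set a : ℝ := 1 / (1 + κ * η) with hadef
  set c : ℝ := 1 - a with hcdef
  have hc0 : 0 ≤ c := by
    have : a ≤ 1 := by
      rw [hadef, div_le_one h1]; nlinarith
    linarith
  have hcle : c ≤ κ / (1 + κ) := by
    rw [hcdef, hadef]
    rw [sub_le_iff_le_add, ← sub_le_iff_le_add']
    have heq : 1 - κ / (1 + κ) = 1 / (1 + κ) := by field_simp; ring
    rw [heq]
    exact one_div_le_one_div_of_le h1 (by nlinarith)
  apply ciSup_le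
  intro x
  set pbar : ℝ := (1 / η) * ∫ y, p y ∂μ with hpbar
  set pbar' : ℝ := (1 / η) * ∫ y, p' y ∂μ with hpbar'
  have hPsi : Psi L κ w μ p x = (a + c * pbar) - (1/2) * max (a + c * pbar - w x) 0 := rfl
  have hPsi' : Psi L κ w μ p' x = (a + c * pbar') - (1/2) * max (a + c * pbar' - w x) 0 := rfl
  have key : |Psi L κ w μ p x - Psi L κ w μ p' x|
      ≤ |(a + c * pbar - w x) - (a + c * pbar' - w x)| := by
    have := hlip (a + c * pbar - w x) (a + c * pbar' - w x)
    rw [hPsi, hPsi']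
    calc |(a + c * pbar) - (1/2) * max (a + c * pbar - w x) 0 -
          ((a + c * pbar') - (1/2) * max (a + c * pbar' - w x) 0)|
        = |((a + c * pbar - w x) - (1/2) * max (a + c * pbar - w x) 0) -
          ((a + c * pbar' - w x) - (1/2) * max (a + c * pbar' - w x) 0)| := by ring_nf
      _ ≤ _ := this
  refine key.trans ?_
  have : (a + c * pbar - w x) - (a + c * pbar' - w x) = c * (1/η) * ((∫ y, p y ∂μ) - ∫ y, p' y ∂μ) := by
    rw [hpbar, hpbar']; ring
  rw [this, abs_mul, abs_of_nonneg (by positivity : (0:ℝ) ≤ c * (1/η))]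
  calc c * (1/η) * |(∫ y, p y ∂μ) - ∫ y, p' y ∂μ|
      ≤ c * (1/η) * (M * η) := by
        apply mul_le_mul_of_nonneg_left hint (by positivity)
    _ = c * M := by field_simp
    _ ≤ (κ / (1 + κ)) * M := mul_le_mul_of_nonneg_right hcle hM0
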